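/- Let 𝒞 be a pretriangulated category with a bounded weight structure. Then 𝒞 coincides with the smallest strictly full triangulated subcategory of itself containing the heart 𝒞^{w=0}; that is, every object of 𝒞 belongs to the closure of the heart under isomorphisms, shifts and cones (extensions). -/

import Mathlib

open CategoryTheory Category Limits Pretriangulated

/-- A weight structure on a pretriangulated category. -/
structure WeightStructure (C : Type*) [Category C] [HasZeroObject C] [HasShift C ℤ]
    [Preadditive C] [∀ n : ℤ, (CategoryTheory.shiftFunctor C n).Additive]
    [Pretriangulated C] [HasBinaryBiproducts C] where
  le : C → Prop
  ge : C → Prop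
  le_of_isZero : ∀ X : C, IsZero X → le X
  ge_of_isZero : ∀ X : C, IsZero X → ge X
  le_of_iso : ∀ {X Y : C}, (X ≅ Y) → le X → le Y
  ge_of_iso : ∀ {X Y : C}, (X ≅ Y) → ge X → ge Y
  le_biprod : ∀ X Y : C, le X → le Y → le (X ⊞ Y)
  ge_biprod : ∀ X Y : C, ge X → ge Y → ge (X ⊞ Y)
  le_retract : ∀ (X Y : C) (i : X ⟶ Y) (p : Y ⟶ X), i ≫ p = 𝟙 X → le Y → le X
  ge_retract : ∀ (X Y : C) (i : X ⟶ Y) (p : Y ⟶ X), i ≫ p = 𝟙 X → ge Y → ge X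
  ge_shift : ∀ X : C, ge X → ge (X⟦(-1 : ℤ)⟧)
  le_shift : ∀ X : C, le X → le (X⟦(1 : ℤ)⟧)
  orth : ∀ {X Y : C}, ge X → le Y → ∀ f : X ⟶ Y⟦(1 : ℤ)⟧, f = 0
  decomp : ∀ X : C, ∃ (A B : C) (f : B ⟶ X) (g : X ⟶ A) (h : A ⟶ B⟦(1 : ℤ)⟧),
    ge (B⟦(1 : ℤ)⟧) ∧ le A ∧ Triangle.mk f g h ∈ distTriang C

variable {C : Type*} [Category C] [HasZeroObject C] [HasShift C ℤ]
  [Preadditive C] [∀ n : ℤ, (CategoryTheory.shiftFunctor C n).Additive]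
  [Pretriangulated C] [HasBinaryBiproducts C]

/-- `X ∈ 𝒞^{w≤n}`, i.e. `X⟦n⟧ ∈ 𝒞^{w≤0}`. -/
def WeightStructure.leN (w : WeightStructure C) (n : ℤ) (X : C) : Prop := w.le (X⟦n⟧)

/-- `X ∈ 𝒞^{w≥n}`, i.e. `X⟦n⟧ ∈ 𝒞^{w≥0}`. -/
def WeightStructure.geN (w : WeightStructure C) (n : ℤ) (X : C) : Prop := w.ge (X⟦n⟧)

/-- The heart `𝒞^{w=0} = 𝒞^{w≥0} ∩ 𝒞^{w≤0}`. -/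
def WeightStructure.heart (w : WeightStructure C) (X : C) : Prop := w.ge X ∧ w.le X

/-- A weight structure is bounded if every object lies in some `𝒞^{w≥n}` and some
`𝒞^{w≤m}`. -/
def WeightStructure.Bounded (w : WeightStructure C) : Prop :=
  ∀ X : C, ∃ n m : ℤ, w.geN n X ∧ w.leN m X

/-- The smallest strictly full triangulated subcategory of `C` containing a class `S` of
objects: closure of `S` under isomorphisms, shifts and cones (it contains the zero
objects). -/
inductive TriaClosure (S : C → Prop) : C → Prop
  | of (X : C) (hX : S X) : TriaClosure S X
  | zero (X : C) (hX : IsZero X) : TriaClosure S X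
  | iso {X Y : C} (e : X ≅ Y) (hX : TriaClosure S X) : TriaClosure S Y
  | shift (X : C) (n : ℤ) (hX : TriaClosure S X) : TriaClosure S (X⟦n⟧)
  | cone {T : Triangle C} (hT : T ∈ distTriang C) (h₁ : TriaClosure S T.obj₁)
      (h₂ : TriaClosure S T.obj₂) : TriaClosure S T.obj₃

namespace WeightStructure

/-- Maps from an object of `𝒞^{w≥1}` to an object of `𝒞^{w≤0}` vanish. -/
lemma hom_zero (w : WeightStructure C) {X Y : C} (hX : w.ge (X⟦(1 : ℤ)⟧))
    (hY : w.le Y) (f : X ⟶ Y) : f = 0 :=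
  (shiftFunctor C (1 : ℤ)).map_injective (by
    rw [Functor.map_zero]
    exact w.orth hX hY ((shiftFunctor C (1 : ℤ)).map f))

/-- The class `𝒞^{w≤0}` is closed under extensions. -/
lemma le_ext (w : WeightStructure C) {T : Triangle C} (hT : T ∈ distTriang C)
    (h₁ : w.le T.obj₁) (h₃ : w.le T.obj₃) : w.le T.obj₂ := by
  obtain ⟨A, B, f, g, h, hgB, hlA, hD⟩ := w.decomp T.obj₂
  have hf : f = 0 := by
    obtain ⟨e, he⟩ := Triangle.coyoneda_exact₂ T hT f (w.hom_zero hgB h₃ _)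
    rw [he, w.hom_zero hgB h₁ e, zero_comp]
  obtain ⟨r, hr⟩ := Triangle.yoneda_exact₂ _ hD (𝟙 T.obj₂)
    (by change f ≫ 𝟙 _ = 0; rw [hf, zero_comp])
  exact w.le_retract T.obj₂ A g r hr.symm hlA

/-- The class `𝒞^{w≥0}` is closed under extensions. -/
lemma ge_ext (w : WeightStructure C) {T : Triangle C} (hT : T ∈ distTriang C)
    (h₁ : w.ge T.obj₁) (h₃ : w.ge T.obj₃) : w.ge T.obj₂ := by
  obtain ⟨A, B, f, g, h, hgB, hlA, hD⟩ := w.decomp (T.obj₂⟦(-1 : ℤ)⟧)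
  have hzero : ∀ φ : T.obj₂ ⟶ A⟦(1 : ℤ)⟧, φ = 0 := by
    intro φ
    obtain ⟨χ, hχ⟩ := Triangle.yoneda_exact₂ T hT φ (w.orth h₁ hlA _)
    rw [hχ, w.orth h₃ hlA χ, comp_zero]
  have hg1 : g⟦(1 : ℤ)⟧' = 0 := by
    set e := (shiftFunctorCompIsoId C (-1 : ℤ) (1 : ℤ) (by omega)).app T.obj₂
    calc g⟦(1 : ℤ)⟧' = e.hom ≫ (e.inv ≫ g⟦(1 : ℤ)⟧') := by rw [Iso.hom_inv_id_assoc]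
      _ = 0 := by rw [hzero (e.inv ≫ g⟦(1 : ℤ)⟧'), comp_zero]
  set D3 := (Triangle.mk f g h).rotate.rotate.rotate with hD3def
  have hD3 : D3 ∈ distTriang C :=
    rot_of_distTriang _ (rot_of_distTriang _ (rot_of_distTriang _ hD))
  have hm2 : D3.mor₂ = 0 := by
    dsimp [D3, Triangle.rotate]
    change -(g⟦(1 : ℤ)⟧') = 0
    rw [hg1, neg_zero]
  obtain ⟨s, hs⟩ := Triangle.coyoneda_exact₂ _ hD3 (𝟙 D3.obj₂) (by rw [id_comp, hm2])
  have hge : w.ge D3.obj₂ := w.ge_retract D3.obj₂ D3.obj₁ s D3.mor₁ hs.symm hgB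
  exact w.ge_of_iso ((shiftFunctorCompIsoId C (-1 : ℤ) (1 : ℤ) (by omega)).app T.obj₂) hge

lemma le_add_nat (w : WeightStructure C) (X : C) (a : ℤ) (k : ℕ)
    (hX : w.le (X⟦a⟧)) : w.le (X⟦a + (k : ℤ)⟧) := by
  induction k with
  | zero => rw [show a + ((0 : ℕ) : ℤ) = a by omega]; exact hX
  | succ n ih =>
    rw [show a + ((n + 1 : ℕ) : ℤ) = a + (n : ℤ) + 1 by omega]
    exact w.le_of_iso
      (((shiftFunctorAdd' C (a + (n : ℤ)) 1 (a + (n : ℤ) + 1) rfl).app X).symm)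
      (w.le_shift _ ih)

lemma ge_sub_nat (w : WeightStructure C) (X : C) (a : ℤ) (k : ℕ)
    (hX : w.ge (X⟦a⟧)) : w.ge (X⟦a - (k : ℤ)⟧) := by
  induction k with
  | zero => rw [show a - ((0 : ℕ) : ℤ) = a by omega]; exact hX
  | succ n ih =>
    rw [show a - ((n + 1 : ℕ) : ℤ) = a - (n : ℤ) + -1 by omega]
    exact w.ge_of_iso
      (((shiftFunctorAdd' C (a - (n : ℤ)) (-1) (a - (n : ℤ) + -1) rfl).app X).symm)
      (w.ge_shift _ ih)

lemma le_mono (w : WeightStructure C) {X : C} {a b : ℤ} (hab : a ≤ b)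
    (hX : w.le (X⟦a⟧)) : w.le (X⟦b⟧) := by
  obtain ⟨k, hk⟩ := Int.le.dest hab
  rw [show b = a + (k : ℤ) by omega]
  exact w.le_add_nat X a k hX

lemma ge_mono (w : WeightStructure C) {X : C} {a b : ℤ} (hab : b ≤ a)
    (hX : w.ge (X⟦a⟧)) : w.ge (X⟦b⟧) := by
  obtain ⟨k, hk⟩ := Int.le.dest hab
  rw [show b = a - (k : ℤ) by omega]
  exact w.ge_sub_nat X a k hX

lemma isZero_of_lt (w : WeightStructure C) {X : C} {n m : ℤ} (hmn : m < n)
    (hg : w.ge (X⟦n⟧)) (hl : w.le (X⟦m⟧)) : IsZero X := by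
  have hg' : w.ge (X⟦m + 1⟧) := w.ge_mono (by omega) hg
  set e := (shiftFunctorAdd' C m 1 (m + 1) rfl).app X
  have he : e.hom = 0 := w.orth hg' hl e.hom
  have hz : IsZero (X⟦m + 1⟧) := by
    rw [IsZero.iff_id_eq_zero, ← e.hom_inv_id, he, zero_comp]
  have hz' : IsZero ((X⟦m + 1⟧)⟦-(m + 1)⟧) :=
    (shiftFunctor C (-(m + 1))).map_isZero hz
  exact hz'.of_iso ((shiftFunctorCompIsoId C (m + 1) (-(m + 1)) (by omega)).app X).symm

lemma closure_of_le (w : WeightStructure C) (X : C) (n m : ℤ) (hmn : m ≤ n)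
    (hg : w.ge (X⟦n⟧)) (hl : w.le (X⟦m⟧)) : TriaClosure w.heart X := by
  rcases eq_or_lt_of_le hmn with rfl | hlt
  · exact TriaClosure.iso ((shiftFunctorCompIsoId C m (-m) (by omega)).app X)
      (TriaClosure.shift _ (-m) (TriaClosure.of _ ⟨hg, hl⟩))
  · exact TriaClosure.zero X (w.isZero_of_lt hlt hg hl)

lemma key (w : WeightStructure C) : ∀ (k : ℕ) (X : C) (n m : ℤ), (m - n).toNat ≤ k →
    w.ge (X⟦n⟧) → w.le (X⟦m⟧) → TriaClosure w.heart X := by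
  intro k
  induction k with
  | zero =>
    intro X n m hk hg hl
    exact w.closure_of_le X n m (by omega) hg hl
  | succ k ih =>
    intro X n m hk hg hl
    by_cases hmn : m ≤ n
    · exact w.closure_of_le X n m hmn hg hl
    · push_neg at hmn
      obtain ⟨A, B, f, g, h, hgB, hlA, hD⟩ := w.decomp (X⟦n⟧)
      set s : ℤ := m - n - 1 with hs
      -- A is in the heart
      have hgA : w.ge A := w.ge_ext (rot_of_distTriang _ hD) hg hgB
      -- B⟦1⟧ lies in the window [0, s]
      have hlY1s : w.le ((X⟦n⟧)⟦(1 : ℤ)⟧⟦s⟧) := by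
        refine w.le_of_iso ?_ hl
        exact ((shiftFunctorAdd' C n (m - n) m (by omega)).app X) ≪≫
          ((shiftFunctorAdd' C 1 s (m - n) (by omega)).app (X⟦n⟧))
      have hlAs : w.le (A⟦s⟧) :=
        w.le_mono (by omega) (w.le_of_iso (((shiftFunctorZero C ℤ).app A).symm) hlA)
      have hlB1s : w.le ((B⟦(1 : ℤ)⟧)⟦s⟧) := by
        have hT2 := Triangle.shift_distinguished _
          (rot_of_distTriang _ (rot_of_distTriang _ hD)) s
        exact w.le_ext hT2 hlAs hlY1s
      -- conclude by induction
      have cB1 : TriaClosure w.heart (B⟦(1 : ℤ)⟧) := by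
        refine ih (B⟦(1 : ℤ)⟧) 0 s (by omega) ?_ hlB1s
        exact w.ge_of_iso (((shiftFunctorZero C ℤ).app (B⟦(1 : ℤ)⟧)).symm) hgB
      have cA : TriaClosure w.heart A := TriaClosure.of A ⟨hgA, hlA⟩
      have cB : TriaClosure w.heart B :=
        TriaClosure.iso ((shiftFunctorCompIsoId C (1 : ℤ) (-1 : ℤ) (by omega)).app B)
          (TriaClosure.shift _ (-1 : ℤ) cB1)
      have cY : TriaClosure w.heart (X⟦n⟧) :=
        TriaClosure.cone (inv_rot_of_distTriang _ hD)
          (TriaClosure.shift A (-1 : ℤ) cA) cB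
      exact TriaClosure.iso ((shiftFunctorCompIsoId C n (-n) (by omega)).app X)
        (TriaClosure.shift _ (-n) cY)

end WeightStructure

/-- A pretriangulated category with a bounded weight structure is generated, as a
triangulated category, by its heart: every object lies in the closure of the heart under
isomorphisms, shifts and cones. -/
theorem stmt_12 (w : WeightStructure C) (hb : w.Bounded) :
    ∀ X : C, TriaClosure w.heart X := by
  intro X
  obtain ⟨n, m, hg, hl⟩ := hb X
  exact w.key (m - n).toNat X n m le_rfl hg hl
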